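/- In X^{⊗z} with X the 2-dimensional Ū_q(sl_2)-module, for the basis element ρ = ρ_{i_1,...,i_n,z} having ν_1 at positions i_1 < ... < i_n and ν_0 elsewhere, the operator E (acting via the iterated coproduct Δ^{z-1}(E) = Σ_{i=0}^{z-1} 1^{⊗i} ⊗ E ⊗ K^{⊗(z-1-i)}) satisfies E^n ρ = q^{(nz - (n²-n)/2 - Σ_j i_j)} · [n]! · ν_0^{⊗z}. -/

import Mathlib

/-- The quantum integer `[k] = (q^k - q^{-k})/(q - q^{-1})`. -/
noncomputable def qint (q : ℂ) (k : ℤ) : ℂ := (q ^ k - q ^ (-k)) / (q - q⁻¹)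

/-- The quantum factorial `[n]! = [1][2]⋯[n]`. -/
noncomputable def qfact (q : ℂ) (n : ℕ) : ℂ := ∏ j ∈ Finset.range n, qint q (j + 1)

/-- The `z`-fold tensor power `X^{⊗z}` of `X = ℂ²`, realized as functions on bit strings:
`v s` is the coefficient of the basis tensor `ν_{s 0} ⊗ ⋯ ⊗ ν_{s (z-1)}`. -/
abbrev V (z : ℕ) := (Fin z → Fin 2) → ℂ

/-- The basis vector of `V z` corresponding to the bit string `t`. -/
def bvec (z : ℕ) (t : Fin z → Fin 2) : V z := fun s => if s = t then 1 else 0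

/-- The action of `E` on `X^{⊗z}` via the iterated coproduct
`Δ^{z-1}(E) = Σᵢ 1^{⊗i} ⊗ E ⊗ K^{⊗(z-1-i)}`, where `E ν₁ = ν₀`, `E ν₀ = 0`,
`K ν_a = q^{1-2a} ν_a`. -/
noncomputable def Eop (q : ℂ) (z : ℕ) (v : V z) : V z := fun s =>
  ∑ i : Fin z, if s i = 0 then
    (∏ j ∈ Finset.univ.filter (fun j => i < j), q ^ ((1 : ℤ) - 2 * ((s j : ℕ) : ℤ))) *
      v (Function.update s i 1)
  else 0

/-- The action of `F` on `X^{⊗z}` via the iterated coproduct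
`Δ^{z-1}(F) = Σᵢ (K⁻¹)^{⊗i} ⊗ F ⊗ 1^{⊗(z-1-i)}`, where `F ν₀ = ν₁`, `F ν₁ = 0`,
`K⁻¹ ν_a = q^{2a-1} ν_a`. -/
noncomputable def Fop (q : ℂ) (z : ℕ) (v : V z) : V z := fun s =>
  ∑ i : Fin z, if s i = 1 then
    (∏ j ∈ Finset.univ.filter (fun j => j < i), q ^ (-((1 : ℤ) - 2 * ((s j : ℕ) : ℤ)))) *
      v (Function.update s i 0)
  else 0

/-- The action of `K` on `X^{⊗z}` via `Δ^{z-1}(K) = K^{⊗z}`. -/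
noncomputable def Kop (q : ℂ) (z : ℕ) (v : V z) : V z := fun s =>
  (∏ j, q ^ ((1 : ℤ) - 2 * ((s j : ℕ) : ℤ))) * v s

/-- `E^n ρ_{i₁,…,iₙ,z} = q^{nz - (n²-n)/2 - Σⱼ iⱼ}·[n]!·ν₀^{⊗z}`, where the set `S`
of 1-based positions of the `ν₁`'s is `{i₁,…,iₙ}`. -/
noncomputable def EopL (q : ℂ) (z : ℕ) : ((Fin z → Fin 2) → ℂ) →ₗ[ℂ] ((Fin z → Fin 2) → ℂ) where
  toFun := Eop q z
  map_add' v w := by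
    funext s
    simp only [Eop, Pi.add_apply]
    rw [← Finset.sum_add_distrib]
    refine Finset.sum_congr rfl fun i _ => ?_
    split_ifs with h
    · ring
    · simp
  map_smul' c v := by
    funext s
    simp only [Eop, Pi.smul_apply, smul_eq_mul, RingHom.id_apply, Finset.mul_sum]
    refine Finset.sum_congr rfl fun i _ => ?_
    split_ifs with h
    · ring
    · simp

lemma zpow_sum' (q : ℂ) (hq : q ≠ 0) {α} (T : Finset α) (f : α → ℤ) :
    q ^ (∑ j ∈ T, f j) = ∏ j ∈ T, q ^ f j := by
  classical
  induction T using Finset.induction with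
  | empty => simp
  | insert _ _ h ih => rw [Finset.sum_insert h, Finset.prod_insert h, zpow_add₀ hq, ih]

lemma key_iff {z : ℕ} (S : Finset (Fin z)) (i : Fin z) (s : Fin z → Fin 2) :
    (s i = 0 ∧ Function.update s i 1 = fun j => if j ∈ S then (1 : Fin 2) else 0) ↔
      (i ∈ S ∧ s = fun j => if j ∈ S.erase i then (1 : Fin 2) else 0) := by
  constructor
  · rintro ⟨h0, hu⟩
    have hi : i ∈ S := by
      have := congrFun hu i
      simp only [Function.update_self] at this
      by_contra hiS
      rw [if_neg hiS] at this
      exact absurd this (by decide)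
    refine ⟨hi, funext fun j => ?_⟩
    by_cases hj : j = i
    · subst hj
      simp [h0, Finset.notMem_erase]
    · have := congrFun hu j
      rw [Function.update_of_ne hj] at this
      rw [this]
      simp [Finset.mem_erase, hj]
  · rintro ⟨hi, hs⟩
    subst hs
    refine ⟨by simp [Finset.notMem_erase], funext fun j => ?_⟩
    by_cases hj : j = i
    · subst hj; simp [Function.update_self, hi]
    · rw [Function.update_of_ne hj]
      simp only [Finset.mem_erase]
      simp [hj]

lemma Eop_ind (q : ℂ) (hq0 : q ≠ 0) (z : ℕ) (S : Finset (Fin z)) :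
    Eop q z (bvec z (fun j => if j ∈ S then 1 else 0)) =
      ∑ i ∈ S,
        (q ^ (∑ j ∈ Finset.univ.filter (fun j => i < j),
            ((1 : ℤ) - 2 * (if j ∈ S then (1 : ℤ) else 0)))) •
          bvec z (fun j => if j ∈ S.erase i then 1 else 0) := by
  classical
  funext s
  rw [Finset.sum_apply]
  have hrw : ∀ i ∈ (Finset.univ : Finset (Fin z)),
      (if s i = 0 then
        (∏ j ∈ Finset.univ.filter (fun j => i < j), q ^ ((1 : ℤ) - 2 * ((s j : ℕ) : ℤ))) *
          bvec z (fun j => if j ∈ S then 1 else 0) (Function.update s i 1)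
      else 0) =
      (if i ∈ S then
        (q ^ (∑ j ∈ Finset.univ.filter (fun j => i < j),
            ((1 : ℤ) - 2 * (if j ∈ S then (1 : ℤ) else 0)))) *
          bvec z (fun j => if j ∈ S.erase i then 1 else 0) s
      else 0) := by
    intro i _
    by_cases hc : i ∈ S ∧ s = fun j => if j ∈ S.erase i then (1 : Fin 2) else 0
    · obtain ⟨hi, hs⟩ := hc
      obtain ⟨h0, hu⟩ := (key_iff S i s).mpr ⟨hi, hs⟩
      rw [if_pos h0, if_pos hi]
      have hb1 : bvec z (fun j => if j ∈ S then 1 else 0) (Function.update s i 1) = 1 :=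
        if_pos hu
      have hb2 : bvec z (fun j => if j ∈ S.erase i then 1 else 0) s = 1 := if_pos hs
      rw [hb1, hb2, mul_one, mul_one, zpow_sum' q hq0]
      refine Finset.prod_congr rfl fun j hj => ?_
      simp only [Finset.mem_filter] at hj
      have hji : j ≠ i := fun h => absurd (h ▸ hj.2) (lt_irrefl i)
      have : s j = if j ∈ S then (1 : Fin 2) else 0 := by
        rw [hs]
        simp only [Finset.mem_erase]
        simp [hji]
      rw [this]
      by_cases hjS : j ∈ S <;> simp [hjS]
    · -- both sides are zero
      have hz1 : (if s i = 0 then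
          (∏ j ∈ Finset.univ.filter (fun j => i < j), q ^ ((1 : ℤ) - 2 * ((s j : ℕ) : ℤ))) *
            bvec z (fun j => if j ∈ S then 1 else 0) (Function.update s i 1)
        else 0) = 0 := by
        by_cases h0 : s i = 0
        · rw [if_pos h0]
          have : Function.update s i 1 ≠ fun j => if j ∈ S then (1 : Fin 2) else 0 := by
            intro hu
            exact hc ((key_iff S i s).mp ⟨h0, hu⟩)
          rw [show bvec z (fun j => if j ∈ S then 1 else 0) (Function.update s i 1) = 0
            from if_neg this, mul_zero]
        · rw [if_neg h0]
      rw [hz1]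
      by_cases hi : i ∈ S
      · rw [if_pos hi]
        have : s ≠ fun j => if j ∈ S.erase i then (1 : Fin 2) else 0 := fun h => hc ⟨hi, h⟩
        rw [show bvec z (fun j => if j ∈ S.erase i then 1 else 0) s = 0 from if_neg this,
          mul_zero]
      · rw [if_neg hi]
  rw [show Eop q z (bvec z (fun j => if j ∈ S then 1 else 0)) s =
      ∑ i : Fin z, _ from rfl]
  rw [Finset.sum_congr rfl hrw, Finset.sum_ite_mem]
  simp [Finset.univ_inter]

lemma sum_card_above (x : ℂ) : ∀ (n z : ℕ) (S : Finset (Fin z)), S.card = n →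
    ∑ i ∈ S, x ^ ((S.filter (fun j => i < j)).card) = ∑ m ∈ Finset.range n, x ^ m := by
  intro n
  induction n with
  | zero => intro z S hS; rw [Finset.card_eq_zero] at hS; subst hS; simp
  | succ n ih =>
    intro z S hS
    have hne : S.Nonempty := Finset.card_pos.mp (by omega)
    set M := S.max' hne with hM
    have hMS : M ∈ S := S.max'_mem hne
    have hsplit := Finset.sum_erase_add S (fun i => x ^ ((S.filter (fun j => i < j)).card)) hMS
    rw [← hsplit]
    have hMfil : S.filter (fun j => M < j) = ∅ := by
      apply Finset.filter_eq_empty_iff.mpr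
      intro j hj
      exact not_lt.mpr (S.le_max' j hj)
    have hcard : ∀ i ∈ S.erase M,
        (S.filter (fun j => i < j)).card = ((S.erase M).filter (fun j => i < j)).card + 1 := by
      intro i hi
      obtain ⟨hiM, hiS⟩ := Finset.mem_erase.mp hi
      have hiltM : i < M := lt_of_le_of_ne (S.le_max' i hiS) hiM
      have : S.filter (fun j => i < j) = insert M ((S.erase M).filter (fun j => i < j)) := by
        ext j
        simp only [Finset.mem_filter, Finset.mem_insert, Finset.mem_erase]
        constructor
        · rintro ⟨hjS, hij⟩
          by_cases hjM : j = M
          · exact Or.inl hjM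
          · exact Or.inr ⟨⟨hjM, hjS⟩, hij⟩
        · rintro (rfl | ⟨⟨_, hjS⟩, hij⟩)
          · exact ⟨hMS, hiltM⟩
          · exact ⟨hjS, hij⟩
      rw [this, Finset.card_insert_of_notMem (by simp [Finset.mem_filter])]
    have h1 : ∑ i ∈ S.erase M, x ^ ((S.filter (fun j => i < j)).card) =
        x * ∑ i ∈ S.erase M, x ^ (((S.erase M).filter (fun j => i < j)).card) := by
      rw [Finset.mul_sum]
      refine Finset.sum_congr rfl fun i hi => ?_
      rw [hcard i hi, pow_succ, mul_comm]
    rw [h1, ih z (S.erase M) (by rw [Finset.card_erase_of_mem hMS, hS]; omega)]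
    simp only [hMfil, Finset.card_empty, pow_zero, Finset.sum_range_succ', pow_succ]
    rw [← Finset.sum_mul]
    ring

lemma geom_tel (q : ℂ) (hq0 : q ≠ 0) (n : ℕ) :
    (∑ m ∈ Finset.range n, q ^ (-2 * (m : ℤ))) * (q - q⁻¹) = q - q ^ (1 - 2 * (n : ℤ)) := by
  induction n with
  | zero => simp
  | succ n ih =>
    rw [Finset.sum_range_succ, add_mul, ih]
    have h1 : q ^ (-2 * ((n : ℤ))) * (q - q⁻¹) = q ^ (1 - 2 * (n : ℤ)) - q ^ (-1 - 2 * (n : ℤ)) := by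
      rw [mul_sub]
      rw [show q ^ (1 - 2 * (n : ℤ)) = q ^ (-2 * (n : ℤ)) * q ^ (1 : ℤ) by
        rw [← zpow_add₀ hq0]; ring_nf]
      rw [show q ^ (-1 - 2 * (n : ℤ)) = q ^ (-2 * (n : ℤ)) * q ^ (-1 : ℤ) by
        rw [← zpow_add₀ hq0]; ring_nf]
      rw [zpow_one, zpow_neg_one]
    rw [h1]
    push_cast
    rw [show (1 : ℤ) - 2 * ((n : ℤ) + 1) = -1 - 2 * (n : ℤ) by ring]
    ring

lemma sum_q (q : ℂ) (hq0 : q ≠ 0) (hq1 : q ^ 2 ≠ 1) (n z : ℕ) (S : Finset (Fin z))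
    (hS : S.card = n + 1) :
    ∑ i ∈ S, q ^ (-2 * (((S.filter (fun j => i < j)).card : ℤ))) =
      q ^ (-(n : ℤ)) * qint q ((n : ℤ) + 1) := by
  have hqq : q - q⁻¹ ≠ 0 := by
    rw [sub_ne_zero]
    intro h
    apply hq1
    rw [sq]
    nth_rewrite 2 [h]
    exact mul_inv_cancel₀ hq0
  apply mul_right_cancel₀ hqq
  have h1 : ∑ i ∈ S, q ^ (-2 * (((S.filter (fun j => i < j)).card : ℤ))) =
      ∑ m ∈ Finset.range (n + 1), q ^ (-2 * (m : ℤ)) := by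
    rw [show (∑ i ∈ S, q ^ (-2 * (((S.filter (fun j => i < j)).card : ℤ)))) =
        ∑ i ∈ S, (q ^ (-2 : ℤ)) ^ ((S.filter (fun j => i < j)).card) from
      Finset.sum_congr rfl fun i _ => by rw [← zpow_natCast, ← zpow_mul]]
    rw [sum_card_above (q ^ (-2 : ℤ)) (n + 1) z S hS]
    exact Finset.sum_congr rfl fun m _ => by rw [← zpow_natCast, ← zpow_mul]
  rw [h1, geom_tel q hq0 (n + 1)]
  rw [qint, mul_assoc, div_mul_cancel₀ _ hqq, mul_sub, ← zpow_add₀ hq0, ← zpow_add₀ hq0]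
  push_cast
  rw [show -(n : ℤ) + ((n : ℤ) + 1) = 1 by ring,
    show -(n : ℤ) + -((n : ℤ) + 1) = 1 - 2 * ((n : ℤ) + 1) by ring, zpow_one]

lemma scalar_step (q : ℂ) (hq0 : q ≠ 0) (hq1 : q ^ 2 ≠ 1) (z n : ℕ) (S : Finset (Fin z))
    (hS : S.card = n + 1) :
    ∑ i ∈ S,
        q ^ (∑ j ∈ Finset.univ.filter (fun j => i < j),
            ((1 : ℤ) - 2 * (if j ∈ S then (1 : ℤ) else 0))) *
          (q ^ ((n : ℤ) * z - ((n : ℤ) ^ 2 - n) / 2 - ∑ a ∈ S.erase i, ((a : ℕ) + 1 : ℤ)) *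
            qfact q n) =
      q ^ ((↑(n + 1) : ℤ) * z - ((↑(n + 1) : ℤ) ^ 2 - ↑(n + 1)) / 2 -
          ∑ a ∈ S, ((a : ℕ) + 1 : ℤ)) * qfact q (n + 1) := by
  classical
  have hdiv : ((↑(n + 1) : ℤ) ^ 2 - ↑(n + 1)) / 2 = ((n : ℤ) ^ 2 - n) / 2 + n := by
    push_cast
    rw [show ((n : ℤ) + 1) ^ 2 - ((n : ℤ) + 1) = ((n : ℤ) ^ 2 - n) + (n : ℤ) * 2 by ring,
      Int.add_mul_ediv_right _ _ (by norm_num : (2 : ℤ) ≠ 0)]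
  rw [hdiv]
  set D : ℤ := ((n : ℤ) ^ 2 - n) / 2 with hD
  set Sig : ℤ := ∑ a ∈ S, ((a : ℕ) + 1 : ℤ) with hSig
  set C : ℤ := ((n : ℤ) + 1) * z - D - Sig with hC
  have hterm : ∀ i ∈ S,
      q ^ (∑ j ∈ Finset.univ.filter (fun j => i < j),
          ((1 : ℤ) - 2 * (if j ∈ S then (1 : ℤ) else 0))) *
        (q ^ ((n : ℤ) * z - D - ∑ a ∈ S.erase i, ((a : ℕ) + 1 : ℤ)) * qfact q n) =
      q ^ C * q ^ (-2 * (((S.filter (fun j => i < j)).card : ℤ))) * qfact q n := by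
    intro i hi
    have hfe : Finset.univ.filter (fun j => i < j) = Finset.Ioi i := by
      ext j; simp
    have hcard1 : ((Finset.univ.filter (fun j => i < j)).card : ℤ) = (z : ℤ) - 1 - (i : ℤ) := by
      rw [hfe, Fin.card_Ioi]
      have := i.isLt
      omega
    have hei : (∑ j ∈ Finset.univ.filter (fun j => i < j),
        ((1 : ℤ) - 2 * (if j ∈ S then (1 : ℤ) else 0))) =
        ((z : ℤ) - 1 - (i : ℤ)) - 2 * (((S.filter (fun j => i < j)).card : ℤ)) := by
      rw [Finset.sum_sub_distrib, ← Finset.mul_sum, Finset.sum_const, nsmul_eq_mul, mul_one,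
        hcard1, Finset.sum_boole]
      have hff : Finset.filter (fun j => j ∈ S) (Finset.univ.filter (fun j => i < j)) =
          S.filter (fun j => i < j) := by
        rw [Finset.filter_filter]
        ext j
        simp [and_comm]
      rw [hff]
    have hse : ∑ a ∈ S.erase i, ((a : ℕ) + 1 : ℤ) = Sig - ((i : ℕ) + 1 : ℤ) := by
      rw [hSig, ← Finset.sum_erase_add S _ hi]
      ring
    rw [hei, hse, ← mul_assoc, ← zpow_add₀ hq0, ← zpow_add₀ hq0]
    congr 2
    ring
  rw [Finset.sum_congr rfl hterm, ← Finset.sum_mul, ← Finset.mul_sum,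
    sum_q q hq0 hq1 n z S hS]
  rw [show qfact q (n + 1) = qfact q n * qint q ((n : ℤ) + 1) by
    rw [qfact, Finset.prod_range_succ, ← qfact]]
  have hCe : C + -(n : ℤ) = (↑(n + 1) : ℤ) * ↑z - (D + ↑n) - Sig := by
    rw [hC]
    push_cast [hdiv]
    ring
  rw [show q ^ C * (q ^ (-(n : ℤ)) * qint q ((n : ℤ) + 1)) * qfact q n =
      q ^ C * q ^ (-(n : ℤ)) * (qint q ((n : ℤ) + 1) * qfact q n) by ring,
    ← zpow_add₀ hq0, hCe]
  ring

lemma iterate_sum_smul (q : ℂ) (z n : ℕ) {α} (T : Finset α) (c : α → ℂ)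
    (v : α → ((Fin z → Fin 2) → ℂ)) :
    (Eop q z)^[n] (∑ i ∈ T, c i • v i) = ∑ i ∈ T, c i • (Eop q z)^[n] (v i) := by
  have h : Eop q z = ⇑(EopL q z) := rfl
  rw [h]
  simp only [← Module.End.pow_apply]
  rw [map_sum]
  simp only [map_smul]

theorem E_pow_basis (q : ℂ) (hq0 : q ≠ 0) (hq1 : q ^ 2 ≠ 1) (z n : ℕ)
    (S : Finset (Fin z)) (hS : S.card = n) :
    (Eop q z)^[n] (bvec z (fun j => if j ∈ S then 1 else 0)) =
      (q ^ ((n : ℤ) * z - ((n : ℤ) ^ 2 - n) / 2 - ∑ a ∈ S, ((a : ℕ) + 1 : ℤ)) * qfact q n) •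
        bvec z (fun _ => 0) := by
  classical
  induction n generalizing S with
  | zero =>
    rw [Finset.card_eq_zero] at hS
    subst hS
    simp only [Function.iterate_zero, id_eq, Finset.sum_empty, Finset.notMem_empty,
      if_false, qfact, Finset.range_zero, Finset.prod_empty]
    norm_num
  | succ n ih =>
    rw [Function.iterate_succ_apply, Eop_ind q hq0 z S, iterate_sum_smul]
    have hstep : ∀ i ∈ S,
        (q ^ (∑ j ∈ Finset.univ.filter (fun j => i < j),
            ((1 : ℤ) - 2 * (if j ∈ S then (1 : ℤ) else 0)))) •
          (Eop q z)^[n] (bvec z (fun j => if j ∈ S.erase i then 1 else 0)) =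
        (q ^ (∑ j ∈ Finset.univ.filter (fun j => i < j),
            ((1 : ℤ) - 2 * (if j ∈ S then (1 : ℤ) else 0))) *
          (q ^ ((n : ℤ) * z - ((n : ℤ) ^ 2 - n) / 2 - ∑ a ∈ S.erase i, ((a : ℕ) + 1 : ℤ)) *
            qfact q n)) • bvec z (fun _ => 0) := by
      intro i hi
      rw [ih (S.erase i) (by rw [Finset.card_erase_of_mem hi, hS]; omega), smul_smul]
    rw [Finset.sum_congr rfl hstep, ← Finset.sum_smul]
    congr 1
    exact scalar_step q hq0 hq1 z n S hS
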